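/- arXiv:2504.09771 — 4 statements merged into one kernel-verified Lean document; each statement's English description precedes it below -/
import Mathlib

section
/- Let X and Y be skew-Hermitian N×N complex matrices. Then ‖exp(X) − exp(Y)‖_op ≤ ‖X − Y‖_op, where exp denotes the matrix exponential. -/
open scoped Matrix Matrix.Norms.L2Operator

/-- The operator norm (largest singular value) of a complex square matrix. -/
noncomputable def opNorm {N : ℕ} (A : Matrix (Fin N) (Fin N) ℂ) : ℝ :=
  ‖Matrix.toEuclideanCLM (𝕜 := ℂ) A‖

set_option maxHeartbeats 1000000 in
set_option synthInstance.maxHeartbeats 1000000 in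
/-- Upper-bound half of Lemma 2: for skew-Hermitian `X`, `Y`,
`‖exp(X) − exp(Y)‖_op ≤ ‖X − Y‖_op`. -/
theorem opNorm_exp_sub_exp_le {N : ℕ}
    (X Y : Matrix (Fin N) (Fin N) ℂ)
    (hX : Xᴴ = -X) (hY : Yᴴ = -Y) :
    opNorm (NormedSpace.exp X - NormedSpace.exp Y) ≤ opNorm (X - Y) := by
  classical
  haveI hsc : SMulCommClass ℝ (EuclideanSpace ℂ (Fin N) →L[ℂ] EuclideanSpace ℂ (Fin N))
      (EuclideanSpace ℂ (Fin N) →L[ℂ] EuclideanSpace ℂ (Fin N)) := by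
    constructor
    intro r x y
    show r • (x * y) = x * (r • y)
    rw [← Complex.coe_smul r (x * y), ← Complex.coe_smul r y, mul_smul_comm]
  haveI hst : IsScalarTower ℝ (EuclideanSpace ℂ (Fin N) →L[ℂ] EuclideanSpace ℂ (Fin N))
      (EuclideanSpace ℂ (Fin N) →L[ℂ] EuclideanSpace ℂ (Fin N)) := by
    constructor
    intro r x y
    show (r • x) * y = r • (x * y)
    rw [← Complex.coe_smul r x, ← Complex.coe_smul r (x * y), smul_mul_assoc]
  set φ := Matrix.toEuclideanCLM (𝕜 := ℂ) (n := Fin N) with hφ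
  set A : EuclideanSpace ℂ (Fin N) →L[ℂ] EuclideanSpace ℂ (Fin N) := φ X with hA
  set B : EuclideanSpace ℂ (Fin N) →L[ℂ] EuclideanSpace ℂ (Fin N) := φ Y with hB
  -- φ is continuous
  have hcont : Continuous (φ : Matrix (Fin N) (Fin N) ℂ →
      (EuclideanSpace ℂ (Fin N) →L[ℂ] EuclideanSpace ℂ (Fin N))) :=
    LinearMap.continuous_of_finiteDimensional
      ({ toFun := φ, map_add' := map_add φ, map_smul' := map_smul φ } :
        Matrix (Fin N) (Fin N) ℂ →ₗ[ℂ]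
          (EuclideanSpace ℂ (Fin N) →L[ℂ] EuclideanSpace ℂ (Fin N)))
  have hmapexp : ∀ M : Matrix (Fin N) (Fin N) ℂ,
      φ (NormedSpace.exp M) = NormedSpace.exp (φ M) := by
    intro M
    let +nondep : NormedAlgebra ℚ (Matrix (Fin N) (Fin N) ℂ) := .restrictScalars ℚ ℂ _
    let +nondep : NormedAlgebra ℚ (EuclideanSpace ℂ (Fin N) →L[ℂ] EuclideanSpace ℂ (Fin N)) :=
      .restrictScalars ℚ ℂ _
    rw [NormedSpace.map_exp φ hcont M]
  -- skew-adjointness transfers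
  have hskew : ∀ (M : Matrix (Fin N) (Fin N) ℂ), Mᴴ = -M → star (φ M) = -(φ M) := by
    intro M hM
    rw [← map_star φ M]
    show φ (Mᴴ) = -(φ M)
    rw [hM, map_neg]
  have hAs : star A = -A := hskew X hX
  have hBs : star B = -B := hskew Y hY
  have heq1 : opNorm (NormedSpace.exp X - NormedSpace.exp Y)
      = ‖NormedSpace.exp A - NormedSpace.exp B‖ := by
    rw [opNorm, ← hφ, map_sub, hmapexp X, hmapexp Y]
  have heq2 : opNorm (X - Y) = ‖A - B‖ := by rw [opNorm, ← hφ, map_sub]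
  rw [heq1, heq2]
  clear_value A B
  clear hA hB hmapexp hskew hcont hφ heq1 heq2 hX hY X Y
  -- unitaries
  have hunit : ∀ (t : ℝ) (C : EuclideanSpace ℂ (Fin N) →L[ℂ] EuclideanSpace ℂ (Fin N)),
      star C = -C → NormedSpace.exp (t • C) ∈
        unitary (EuclideanSpace ℂ (Fin N) →L[ℂ] EuclideanSpace ℂ (Fin N)) := by
    intro t C hC
    let +nondep : NormedAlgebra ℚ (EuclideanSpace ℂ (Fin N) →L[ℂ] EuclideanSpace ℂ (Fin N)) :=
      .restrictScalars ℚ ℂ _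
    apply NormedSpace.exp_mem_unitary_of_mem_skewAdjoint
    rw [skewAdjoint.mem_iff]
    calc star (t • C) = star ((t : ℂ) • C) := congrArg star (Complex.coe_smul t C).symm
      _ = star (t : ℂ) • star C := star_smul _ _
      _ = (t : ℂ) • (-C) := by rw [hC, Complex.star_def, Complex.conj_ofReal]
      _ = -((t : ℂ) • C) := smul_neg _ _
      _ = -(t • C) := congrArg Neg.neg (Complex.coe_smul t C)
  -- the path
  set g : ℝ → (EuclideanSpace ℂ (Fin N) →L[ℂ] EuclideanSpace ℂ (Fin N)) :=
    fun t => NormedSpace.exp ((1 - t) • A) * NormedSpace.exp (t • B) with hg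
  set g' : ℝ → (EuclideanSpace ℂ (Fin N) →L[ℂ] EuclideanSpace ℂ (Fin N)) := fun t =>
    NormedSpace.exp ((1 - t) • A) * (B - A) * NormedSpace.exp (t • B) with hg'
  have hderiv : ∀ t : ℝ, HasDerivAt g (g' t) t := by
    intro t
    have hin : HasDerivAt (fun u : ℝ => 1 - u) (-1) t := (hasDerivAt_id t).const_sub 1
    have h1 : HasDerivAt (fun u : ℝ => NormedSpace.exp (u • A))
        (NormedSpace.exp ((1 - t) • A) * A) (1 - t) :=
      hasDerivAt_exp_smul_const A (1 - t)
    have hcomp : HasDerivAt (fun u : ℝ => NormedSpace.exp ((1 - u) • A))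
        (-(NormedSpace.exp ((1 - t) • A) * A)) t :=
      h1.comp_const_sub 1 t
    have h2 : HasDerivAt (fun u : ℝ => NormedSpace.exp (u • B))
        (NormedSpace.exp (t • B) * B) t := hasDerivAt_exp_smul_const B t
    have hprod := hcomp.mul h2
    have hc : NormedSpace.exp (t • B) * B = B * NormedSpace.exp (t • B) :=
      (((Commute.refl B).smul_left t).exp_left)
    refine hprod.congr_deriv (Eq.symm ?_)
    simp only [hg']
    rw [hc]
    show NormedSpace.exp ((1 - t) • A) * (B - A) * NormedSpace.exp (t • B) =
      -(NormedSpace.exp ((1 - t) • A) * A) * NormedSpace.exp (t • B) +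
        NormedSpace.exp ((1 - t) • A) * (B * NormedSpace.exp (t • B))
    rw [show ∀ x y : EuclideanSpace ℂ (Fin N) →L[ℂ] EuclideanSpace ℂ (Fin N),
      -x * y = -(x * y) from fun x y => by ext v; simp]
    simp only [mul_sub, sub_mul, mul_assoc]
    abel
  have hbound : ∀ t : ℝ, t ∈ Set.Icc (0 : ℝ) 1 → ‖g' t‖ ≤ ‖A - B‖ := by
    intro t _
    have h1 : ‖NormedSpace.exp ((1 - t) • A) * (B - A) * NormedSpace.exp (t • B)‖
        = ‖NormedSpace.exp ((1 - t) • A) * (B - A)‖ :=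
      CStarRing.norm_mul_mem_unitary _ (hunit t B hBs)
    have h2 : ‖NormedSpace.exp ((1 - t) • A) * (B - A)‖ = ‖B - A‖ :=
      CStarRing.norm_mem_unitary_mul _ (hunit (1 - t) A hAs)
    rw [hg', h1, h2, norm_sub_rev]
  have key : ‖g 1 - g 0‖ ≤ ‖A - B‖ * (1 - 0) :=
    norm_image_sub_le_of_norm_deriv_le_segment'
      (fun t ht => (hderiv t).hasDerivWithinAt)
      (fun t ht => hbound t (Set.Ico_subset_Icc_self ht)) 1 (Set.right_mem_Icc.2 zero_le_one)
  have hzA : (0:ℝ) • A = 0 := zero_smul ℝ A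
  have hzB : (0:ℝ) • B = 0 := zero_smul ℝ B
  have hg1 : g 1 = NormedSpace.exp B := by
    simp [hg, hzA, NormedSpace.exp_zero, one_smul]
  have hg0 : g 0 = NormedSpace.exp A := by
    simp [hg, hzB, NormedSpace.exp_zero, one_smul]
  have hAB : ‖NormedSpace.exp A - NormedSpace.exp B‖ ≤ ‖A - B‖ := by
    rw [← hg1, ← hg0, norm_sub_rev]
    simpa using key
  exact hAB
end

section
/- Let X and Y be N×N complex matrices with ‖X‖_op ≤ p and ‖Y‖_op ≤ p. Then (2 − exp(p)) · ‖X − Y‖_op ≤ ‖exp(X) − exp(Y)‖_op, where exp denotes the matrix exponential. -/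
open scoped Matrix

section AuxLemmas

open NormedSpace
open scoped Nat

variable {𝔸 : Type*} [NormedRing 𝔸] [NormedAlgebra ℂ 𝔸] [CompleteSpace 𝔸]

lemma pow_sub_pow_norm_le (A B : 𝔸) (p : ℝ) (hA : ‖A‖ ≤ p) (hB : ‖B‖ ≤ p) :
    ∀ n : ℕ, ‖A ^ (n+1) - B ^ (n+1)‖ ≤ (n+1) * p ^ n * ‖A - B‖ := by
  have hp : 0 ≤ p := le_trans (norm_nonneg A) hA
  intro n
  induction n with
  | zero => simp
  | succ n ih =>
    push_cast
    have key : A ^ (n+2) - B ^ (n+2) = A * (A ^ (n+1) - B ^ (n+1)) + (A - B) * B ^ (n+1) := by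
      rw [mul_sub, sub_mul, ← pow_succ', ← pow_succ']; abel
    calc ‖A ^ (n+2) - B ^ (n+2)‖
        ≤ ‖A * (A ^ (n+1) - B ^ (n+1))‖ + ‖(A - B) * B ^ (n+1)‖ := by
          rw [key]; exact norm_add_le _ _
      _ ≤ ‖A‖ * ‖A ^ (n+1) - B ^ (n+1)‖ + ‖A - B‖ * ‖B ^ (n+1)‖ := by
          gcongr <;> exact norm_mul_le _ _
      _ ≤ p * (((n:ℝ)+1) * p ^ n * ‖A - B‖) + ‖A - B‖ * p ^ (n+1) := by
          have hBpow : ‖B ^ (n+1)‖ ≤ p ^ (n+1) :=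
            le_trans (norm_pow_le' B (Nat.succ_pos n)) (pow_le_pow_left₀ (norm_nonneg B) hB _)
          exact add_le_add (mul_le_mul hA ih (norm_nonneg _) hp)
            (mul_le_mul_of_nonneg_left hBpow (norm_nonneg _))
      _ = ((n:ℝ)+1+1) * p ^ (n+1) * ‖A - B‖ := by ring

lemma key_ineq (A B : 𝔸) (p : ℝ) (hA : ‖A‖ ≤ p) (hB : ‖B‖ ≤ p) :
    (2 - Real.exp p) * ‖A - B‖ ≤ ‖exp A - exp B‖ := by
  have hp : 0 ≤ p := le_trans (norm_nonneg A) hA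
  set D : ℕ → 𝔸 := fun k => (k !⁻¹ : ℂ) • (A ^ k - B ^ k) with hD
  have hDsummable : Summable D := by
    have : D = fun k => (k !⁻¹ : ℂ) • A ^ k - (k !⁻¹ : ℂ) • B ^ k := by
      funext k; simp [hD, smul_sub]
    rw [this]
    exact (expSeries_summable' (𝕂 := ℂ) A).sub (expSeries_summable' (𝕂 := ℂ) B)
  have eA : exp A = ∑' n : ℕ, (n !⁻¹ : ℂ) • A ^ n := by rw [exp_eq_tsum ℂ]
  have eB : exp B = ∑' n : ℕ, (n !⁻¹ : ℂ) • B ^ n := by rw [exp_eq_tsum ℂ]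
  have hDsum : ∑' k, D k = exp A - exp B := by
    rw [eA, eB,
      ← Summable.tsum_sub (expSeries_summable' (𝕂 := ℂ) A) (expSeries_summable' (𝕂 := ℂ) B)]
    congr 1; funext k; simp [hD, smul_sub]
  -- norm of D(k+2)
  have hDnorm : ∀ k : ℕ, ‖D (k+2)‖ ≤ ((k+1)! : ℝ)⁻¹ * p ^ (k+1) * ‖A - B‖ := by
    intro k
    have h1 : ‖D (k+2)‖ = ((k+2)! : ℝ)⁻¹ * ‖A ^ (k+2) - B ^ (k+2)‖ := by
      simp [hD, norm_smul]
    rw [h1]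
    have h2 := pow_sub_pow_norm_le A B p hA hB (k+1)
    have h3 : ((k+2)! : ℝ) = (k+2) * (k+1)! := by
      rw [show k+2 = (k+1)+1 from rfl, Nat.factorial_succ]; push_cast; ring
    calc ((k+2)! : ℝ)⁻¹ * ‖A ^ (k+2) - B ^ (k+2)‖
        ≤ ((k+2)! : ℝ)⁻¹ * ((k+2) * p ^ (k+1) * ‖A - B‖) := by
          gcongr
          exact le_of_le_of_eq h2 (by push_cast; ring)
      _ = ((k+1)! : ℝ)⁻¹ * p ^ (k+1) * ‖A - B‖ := by
          rw [h3]
          have : ((k+1)! : ℝ) ≠ 0 := by positivity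
          field_simp
  have hgsummable : Summable (fun k : ℕ => ((k+1)! : ℝ)⁻¹ * p ^ (k+1) * ‖A - B‖) := by
    apply Summable.mul_right
    have := (Real.summable_pow_div_factorial p).comp_injective (add_left_injective 1)
    simpa [div_eq_mul_inv, mul_comm, Function.comp_def] using this
  have hDnormsummable : Summable (fun k : ℕ => ‖D (k+2)‖) :=
    Summable.of_nonneg_of_le (fun k => norm_nonneg _) hDnorm hgsummable
  -- split
  have hsplit := Summable.sum_add_tsum_nat_add 2 hDsummable
  have hD0 : D 0 = 1 - 1 := by simp [hD]
  have h01 : ∑ i ∈ Finset.range 2, D i = A - B := by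
    rw [Finset.sum_range_succ, Finset.sum_range_one]
    simp [hD]
  have hrem : ‖∑' k, D (k + 2)‖ ≤ (Real.exp p - 1) * ‖A - B‖ := by
    calc ‖∑' k, D (k + 2)‖ ≤ ∑' k, ‖D (k + 2)‖ := norm_tsum_le_tsum_norm hDnormsummable
      _ ≤ ∑' k : ℕ, ((k+1)! : ℝ)⁻¹ * p ^ (k+1) * ‖A - B‖ :=
          Summable.tsum_le_tsum hDnorm hDnormsummable hgsummable
      _ = (Real.exp p - 1) * ‖A - B‖ := by
          rw [tsum_mul_right]
          congr 1
          have hexp : Real.exp p = ∑' n : ℕ, p ^ n / n ! := by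
            rw [Real.exp_eq_exp_ℝ, exp_eq_tsum_div]
          have hsum := Summable.tsum_eq_zero_add (Real.summable_pow_div_factorial p)
          rw [hexp, hsum]
          simp [div_eq_mul_inv, mul_comm]
  have hEq : exp A - exp B = (A - B) + ∑' k, D (k + 2) := by
    rw [← hDsum, ← hsplit, h01]
  rw [hEq]
  have : ‖A - B‖ ≤ ‖(A - B) + ∑' k, D (k + 2)‖ + ‖∑' k, D (k + 2)‖ := by
    calc ‖A - B‖ = ‖((A - B) + ∑' k, D (k + 2)) - ∑' k, D (k + 2)‖ := by
          rw [add_sub_cancel_right]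
      _ ≤ _ := norm_sub_le _ _
  nlinarith [hrem, norm_nonneg (A - B)]

section Aux
open scoped Matrix.Norms.L2Operator

lemma aux_matrix {N : ℕ} (X Y : Matrix (Fin N) (Fin N) ℂ) (p : ℝ)
    (hX : ‖X‖ ≤ p) (hY : ‖Y‖ ≤ p) :
    (2 - Real.exp p) * ‖X - Y‖ ≤ ‖exp X - exp Y‖ :=
  key_ineq X Y p hX hY

end Aux

end AuxLemmas


/-- Lower-bound half of Lemma 2: if `‖X‖_op ≤ p` and `‖Y‖_op ≤ p`, then
`(2 − exp(p)) ‖X − Y‖_op ≤ ‖exp(X) − exp(Y)‖_op`. -/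
theorem le_opNorm_exp_sub_exp {N : ℕ}
    (X Y : Matrix (Fin N) (Fin N) ℂ) (p : ℝ)
    (hX : opNorm X ≤ p) (hY : opNorm Y ≤ p) :
    (2 - Real.exp p) * opNorm (X - Y) ≤
      opNorm (NormedSpace.exp X - NormedSpace.exp Y) := by
  exact aux_matrix X Y p hX hY
end

section
/- Let u₁, …, u_L and v₁, …, v_L be unitary N×N complex matrices such that u_l = v_l for all l outside a set T of indices with |T| = N_t, and ‖u_l − v_l‖_op ≤ ε for all l ∈ T. Let O be a Hermitian N×N matrix, U = ∏_{l=1}^{L} u_l and V = ∏_{l=1}^{L} v_l. Then ‖U†OU − V†OV‖_op ≤ 2 N_t ε ‖O‖_op. -/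
open scoped Matrix

section Aux

variable {E : Type*} [NormedRing E] [StarRing E] [CStarRing E]

/-- Telescoping bound for products of unitaries. -/
lemma norm_prod_ofFn_sub_prod_ofFn_le {L : ℕ} (u v : Fin L → E)
    (hu : ∀ l, u l ∈ unitary E) (hv : ∀ l, v l ∈ unitary E) :
    ‖(List.ofFn u).prod - (List.ofFn v).prod‖ ≤ ∑ l, ‖u l - v l‖ := by
  induction L with
  | zero => simp
  | succ L ih =>
    rw [List.ofFn_succ, List.ofFn_succ, List.prod_cons, List.prod_cons, Fin.sum_univ_succ]
    set P := (List.ofFn fun i : Fin L => u i.succ).prod with hP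
    set Q := (List.ofFn fun i : Fin L => v i.succ).prod with hQ
    have hQu : Q ∈ unitary E := by
      refine list_prod_mem ?_
      intro x hx
      simp only [hQ, List.mem_ofFn] at hx
      obtain ⟨i, rfl⟩ := hx
      exact hv _
    have key : u 0 * P - v 0 * Q = u 0 * (P - Q) + (u 0 - v 0) * Q := by
      rw [mul_sub, sub_mul]; abel
    rw [key]
    calc ‖u 0 * (P - Q) + (u 0 - v 0) * Q‖
        ≤ ‖u 0 * (P - Q)‖ + ‖(u 0 - v 0) * Q‖ := norm_add_le _ _
      _ = ‖u 0 - v 0‖ + ‖P - Q‖ := by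
          rw [CStarRing.norm_mem_unitary_mul _ (hu 0),
            CStarRing.norm_mul_mem_unitary _ hQu, add_comm]
      _ ≤ ‖u 0 - v 0‖ + ∑ i : Fin L, ‖u i.succ - v i.succ‖ := by
          exact add_le_add (le_refl _) (ih _ _ (fun i => hu i.succ) (fun i => hv i.succ))

/-- Conjugation bound: `‖U⋆OU - V⋆OV‖ ≤ 2‖U - V‖‖O‖` for unitaries `U`, `V`. -/
lemma norm_conj_sub_conj_le {U V O : E} (hU : U ∈ unitary E) (hV : V ∈ unitary E) :
    ‖star U * O * U - star V * O * V‖ ≤ 2 * ‖U - V‖ * ‖O‖ := by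
  have key : star U * O * U - star V * O * V
      = star U * O * (U - V) + (star U - star V) * (O * V) := by
    noncomm_ring
  rw [key]
  calc ‖star U * O * (U - V) + (star U - star V) * (O * V)‖
      ≤ ‖star U * O * (U - V)‖ + ‖(star U - star V) * (O * V)‖ := norm_add_le _ _
    _ = ‖O * (U - V)‖ + ‖(star U - star V) * (O * V)‖ := by
        rw [mul_assoc, CStarRing.norm_mem_unitary_mul _ (Unitary.star_mem hU)]
    _ ≤ ‖O‖ * ‖U - V‖ + ‖star U - star V‖ * ‖O * V‖ := by
        exact add_le_add (norm_mul_le _ _) (norm_mul_le _ _)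
    _ = ‖O‖ * ‖U - V‖ + ‖U - V‖ * ‖O‖ := by
        rw [← star_sub, norm_star, CStarRing.norm_mul_mem_unitary _ hV]
    _ = 2 * ‖U - V‖ * ‖O‖ := by ring

/-- Abstract combined bound in a C*-algebra. -/
lemma abstract_bound {L : ℕ} (u v : Fin L → E)
    (hu : ∀ l, u l ∈ unitary E) (hv : ∀ l, v l ∈ unitary E)
    (T : Finset (Fin L)) (Nt : ℕ) (hT : T.card = Nt)
    (heq : ∀ l ∉ T, u l = v l)
    (ε : ℝ) (hδ : ∀ l ∈ T, ‖u l - v l‖ ≤ ε) (O : E) :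
    ‖star (List.ofFn u).prod * O * (List.ofFn u).prod -
        star (List.ofFn v).prod * O * (List.ofFn v).prod‖ ≤ 2 * Nt * ε * ‖O‖ := by
  have hUuni : (List.ofFn u).prod ∈ unitary E :=
    list_prod_mem (by
      intro x hx
      obtain ⟨i, rfl⟩ := List.mem_ofFn.mp hx
      exact hu i)
  have hVuni : (List.ofFn v).prod ∈ unitary E :=
    list_prod_mem (by
      intro x hx
      obtain ⟨i, rfl⟩ := List.mem_ofFn.mp hx
      exact hv i)
  have step1 := norm_conj_sub_conj_le (O := O) hUuni hVuni
  have step2 : ‖(List.ofFn u).prod - (List.ofFn v).prod‖ ≤ Nt * ε := by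
    refine le_trans (norm_prod_ofFn_sub_prod_ofFn_le _ _ hu hv) ?_
    calc (∑ l, ‖u l - v l‖)
        = ∑ l ∈ T, ‖u l - v l‖ := by
          rw [← Finset.sum_subset (Finset.subset_univ T)]
          intro x _ hx
          rw [heq x hx]; simp
      _ ≤ ∑ _l ∈ T, ε := Finset.sum_le_sum hδ
      _ = Nt * ε := by rw [Finset.sum_const, hT, nsmul_eq_mul]
  have hε : (0:ℝ) ≤ ε ∨ Nt = 0 := by
    rcases T.eq_empty_or_nonempty with h | ⟨l, hl⟩
    · right; rw [← hT, h]; simp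
    · left; exact le_trans (norm_nonneg _) (hδ l hl)
  refine le_trans step1 ?_
  rcases hε with h | h
  · have h2 : 2 * ‖(List.ofFn u).prod - (List.ofFn v).prod‖ ≤ 2 * Nt * ε := by
      rw [mul_assoc]; linarith
    exact mul_le_mul_of_nonneg_right h2 (norm_nonneg _)
  · have hT0 : T = ∅ := Finset.card_eq_zero.mp (hT.trans h)
    have huv : (List.ofFn u) = (List.ofFn v) := by
      congr 1; funext l; exact heq l (by simp [hT0])
    rw [huv, sub_self]
    simp [h]

end Aux

/-- Per-gate approximation bound (Eq. (9)): if the unitaries `u_l`, `v_l` agree outside a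
set `T` of `N_t` indices and differ by at most `ε` in operator norm on `T`, then for
`U = ∏ u_l`, `V = ∏ v_l` and Hermitian `O`, `‖U†OU − V†OV‖_op ≤ 2 N_t ε ‖O‖_op`. -/
theorem opNorm_conj_prod_sub_conj_prod_le {N L : ℕ}
    (u v : Fin L → Matrix (Fin N) (Fin N) ℂ)
    (hu : ∀ l, u l ∈ Matrix.unitaryGroup (Fin N) ℂ)
    (hv : ∀ l, v l ∈ Matrix.unitaryGroup (Fin N) ℂ)
    (T : Finset (Fin L)) (Nt : ℕ) (hT : T.card = Nt)
    (heq : ∀ l ∉ T, u l = v l)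
    (ε : ℝ) (hδ : ∀ l ∈ T, opNorm (u l - v l) ≤ ε)
    (O : Matrix (Fin N) (Fin N) ℂ) (hO : O.IsHermitian) :
    opNorm ((List.ofFn u).prodᴴ * O * (List.ofFn u).prod -
        (List.ofFn v).prodᴴ * O * (List.ofFn v).prod) ≤
      2 * Nt * ε * opNorm O := by
  have funi : ∀ (A : Matrix (Fin N) (Fin N) ℂ), A ∈ Matrix.unitaryGroup (Fin N) ℂ →
      Matrix.toEuclideanCLM (𝕜 := ℂ) A ∈
        unitary (EuclideanSpace ℂ (Fin N) →L[ℂ] EuclideanSpace ℂ (Fin N)) := by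
    intro A hA
    rw [Unitary.mem_iff] at hA ⊢
    constructor
    · rw [← map_star, ← map_mul, hA.1, map_one]
    · rw [← map_star, ← map_mul, hA.2, map_one]
  have hmapP : ∀ (w : Fin L → Matrix (Fin N) (Fin N) ℂ),
      Matrix.toEuclideanCLM (𝕜 := ℂ) (List.ofFn w).prod
        = (List.ofFn (fun l => Matrix.toEuclideanCLM (𝕜 := ℂ) (w l))).prod := by
    intro w
    rw [map_list_prod (Matrix.toEuclideanCLM (𝕜 := ℂ)), List.map_ofFn]
    rfl
  have key : opNorm ((List.ofFn u).prodᴴ * O * (List.ofFn u).prod -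
        (List.ofFn v).prodᴴ * O * (List.ofFn v).prod)
      = ‖star (List.ofFn (fun l => Matrix.toEuclideanCLM (𝕜 := ℂ) (u l))).prod *
            Matrix.toEuclideanCLM (𝕜 := ℂ) O *
            (List.ofFn (fun l => Matrix.toEuclideanCLM (𝕜 := ℂ) (u l))).prod -
          star (List.ofFn (fun l => Matrix.toEuclideanCLM (𝕜 := ℂ) (v l))).prod *
            Matrix.toEuclideanCLM (𝕜 := ℂ) O *
            (List.ofFn (fun l => Matrix.toEuclideanCLM (𝕜 := ℂ) (v l))).prod‖ := by
    unfold opNorm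
    rw [map_sub, map_mul, map_mul, map_mul, map_mul,
      ← Matrix.star_eq_conjTranspose, ← Matrix.star_eq_conjTranspose, map_star, map_star,
      hmapP, hmapP]
  rw [key]
  exact abstract_bound _ _ (fun l => funi _ (hu l)) (fun l => funi _ (hv l)) T Nt hT
    (fun l hl => by rw [heq l hl]) ε (fun l hl => by
      have := hδ l hl
      unfold opNorm at this
      rw [map_sub] at this
      exact this) _
end

section
/- Let U and V be unitary N×N complex matrices, O a Hermitian N×N matrix, and ρ a density matrix (positive semidefinite Hermitian with trace 1). Then |Tr(U†OUρ) − Tr(V†OVρ)| ≤ 2√N · ‖U − V‖_op · ‖O‖_op. -/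
open scoped Matrix ComplexOrder

open scoped Matrix.Norms.L2Operator

lemma opNorm_eq_norm {N : ℕ} (A : Matrix (Fin N) (Fin N) ℂ) : opNorm A = ‖A‖ := rfl

set_option maxHeartbeats 800000 in
open scoped MatrixOrder in
lemma abs_trace_mul_le' {N : ℕ} (A ρ : Matrix (Fin N) (Fin N) ℂ)
    (hρ : ρ.PosSemidef) (hρtr : ρ.trace = 1) :
    ‖Matrix.trace (A * ρ)‖ ≤ ‖A‖ := by
  classical
  set P := CFC.sqrt ρ with hPdef
  have hPH : P.IsHermitian := (Matrix.nonneg_iff_posSemidef.mp (CFC.sqrt_nonneg ρ)).1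
  have hPP : P * P = ρ := CFC.sqrt_mul_sqrt_self ρ hρ.nonneg
  set T := Matrix.toEuclideanCLM (𝕜 := ℂ) A with hT
  set x : Fin N → EuclideanSpace ℂ (Fin N) :=
    fun i => (WithLp.equiv 2 (Fin N → ℂ)).symm (fun j => P j i) with hx
  have key : Matrix.trace (A * ρ) = ∑ i, (inner ℂ (x i) (T (x i)) : ℂ) := by
    have h1 : Matrix.trace (A * ρ) = Matrix.trace (P * A * P) := by
      rw [← hPP, ← Matrix.mul_assoc, Matrix.trace_mul_cycle]
    rw [h1, Matrix.trace]
    apply Finset.sum_congr rfl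
    intro i _
    have hTx : ∀ j, T (x i) j = ∑ k, A j k * P k i := by
      intro j
      simp only [hx, hT, WithLp.equiv_symm_apply, Matrix.toEuclideanCLM_toLp,
        PiLp.toLp_apply, Matrix.mulVec,
        dotProduct]
    rw [PiLp.inner_apply]
    simp only [RCLike.inner_apply', hTx]
    have hxij : ∀ j, (x i) j = P j i := fun j => rfl
    simp only [hxij]
    simp only [Matrix.diag, Matrix.mul_apply, Finset.sum_mul, Finset.mul_sum]
    rw [Finset.sum_comm]
    apply Finset.sum_congr rfl; intro j _
    apply Finset.sum_congr rfl; intro k _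
    have hc : (starRingEnd ℂ) (P j i) = P i j := by
      conv_rhs => rw [← hPH]
      simp [Matrix.conjTranspose_apply]
    rw [hc]; ring
  have hsum : ∑ i, ‖x i‖ ^ 2 = 1 := by
    have h1 : (Matrix.trace ρ : ℂ) = ((∑ i, ‖x i‖ ^ 2 : ℝ) : ℂ) := by
      rw [← hPP]
      nth_rewrite 1 [← hPH]
      rw [Matrix.trace, Complex.ofReal_sum]
      apply Finset.sum_congr rfl
      intro i _
      have hnx : ‖x i‖ ^ 2 = ∑ j, ‖P j i‖ ^ 2 := by
        rw [EuclideanSpace.norm_eq, Real.sq_sqrt]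
        · rfl
        · positivity
      rw [hnx, Complex.ofReal_sum]
      simp only [Matrix.diag, Matrix.mul_apply, Matrix.conjTranspose_apply]
      apply Finset.sum_congr rfl
      intro j _
      rw [RCLike.star_def, Complex.conj_mul']
      norm_cast
    rw [hρtr] at h1
    exact_mod_cast h1.symm
  calc ‖Matrix.trace (A * ρ)‖
      = ‖∑ i, (inner ℂ (x i) (T (x i)) : ℂ)‖ := by rw [key]
    _ ≤ ∑ i, ‖(inner ℂ (x i) (T (x i)) : ℂ)‖ := norm_sum_le _ _
    _ ≤ ∑ i, ‖T‖ * ‖x i‖ ^ 2 := by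
        apply Finset.sum_le_sum
        intro i _
        calc ‖(inner ℂ (x i) (T (x i)) : ℂ)‖ ≤ ‖x i‖ * ‖T (x i)‖ :=
              norm_inner_le_norm _ _
          _ ≤ ‖x i‖ * (‖T‖ * ‖x i‖) :=
              mul_le_mul_of_nonneg_left (T.le_opNorm _) (norm_nonneg _)
          _ = ‖T‖ * ‖x i‖ ^ 2 := by ring
    _ = ‖T‖ := by rw [← Finset.mul_sum, hsum, mul_one]
    _ = ‖A‖ := rfl

/-- Combining Lemmas 3 and 4: for unitary `U`, `V`, Hermitian `O` and a density matrix
`ρ`, `|Tr(U†OUρ) − Tr(V†OVρ)| ≤ 2√N ‖U − V‖_op ‖O‖_op`. -/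
theorem abs_trace_conj_sub_trace_conj_le {N : ℕ}
    (U V O ρ : Matrix (Fin N) (Fin N) ℂ)
    (hU : U ∈ Matrix.unitaryGroup (Fin N) ℂ)
    (hV : V ∈ Matrix.unitaryGroup (Fin N) ℂ)
    (hO : O.IsHermitian)
    (hρ : ρ.PosSemidef) (hρtr : ρ.trace = 1) :
    ‖Matrix.trace (Uᴴ * O * U * ρ) - Matrix.trace (Vᴴ * O * V * ρ)‖ ≤
      2 * Real.sqrt N * opNorm (U - V) * opNorm O := by
  rcases Nat.eq_zero_or_pos N with hN | hN
  · exfalso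
    subst hN
    simp [Matrix.trace] at hρtr
  have hN1 : (1 : ℝ) ≤ Real.sqrt N := by
    rw [show (1:ℝ) = Real.sqrt 1 by simp]
    exact Real.sqrt_le_sqrt (by exact_mod_cast hN)
  set M := Uᴴ * O * U - Vᴴ * O * V with hM
  have htr : Matrix.trace (Uᴴ * O * U * ρ) - Matrix.trace (Vᴴ * O * V * ρ)
      = Matrix.trace (M * ρ) := by
    rw [hM, Matrix.sub_mul, Matrix.trace_sub]
  have h1 : ‖Matrix.trace (M * ρ)‖ ≤ ‖M‖ :=
    abs_trace_mul_le' M ρ hρ hρtr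
  have hMle : ‖M‖ ≤ 2 * ‖U - V‖ * ‖O‖ := by
    have hdecomp : M = (U - V)ᴴ * O * U + Vᴴ * (O * (U - V)) := by
      rw [hM, Matrix.conjTranspose_sub]
      noncomm_ring
    have hVs : (star V : Matrix (Fin N) (Fin N) ℂ) ∈ unitary _ := Unitary.star_mem hV
    have hb1 : ‖(U - V)ᴴ * O * U‖ ≤ ‖U - V‖ * ‖O‖ := by
      rw [CStarRing.norm_mul_mem_unitary _ hU]
      calc ‖(U - V)ᴴ * O‖ ≤ ‖(U - V)ᴴ‖ * ‖O‖ := norm_mul_le _ _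
        _ = ‖U - V‖ * ‖O‖ := by rw [Matrix.l2_opNorm_conjTranspose]
    have hb2 : ‖Vᴴ * (O * (U - V))‖ ≤ ‖O‖ * ‖U - V‖ := by
      rw [show (Vᴴ : Matrix (Fin N) (Fin N) ℂ) = star V from rfl,
        CStarRing.norm_mem_unitary_mul _ hVs]
      exact norm_mul_le _ _
    calc ‖M‖ ≤ ‖(U - V)ᴴ * O * U‖ + ‖Vᴴ * (O * (U - V))‖ := by
          rw [hdecomp]; exact norm_add_le _ _
      _ ≤ ‖U - V‖ * ‖O‖ + ‖O‖ * ‖U - V‖ := add_le_add hb1 hb2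
      _ = 2 * ‖U - V‖ * ‖O‖ := by ring
  rw [htr, opNorm_eq_norm, opNorm_eq_norm]
  calc ‖Matrix.trace (M * ρ)‖ ≤ ‖M‖ := h1
    _ ≤ 2 * ‖U - V‖ * ‖O‖ := hMle
    _ ≤ 2 * Real.sqrt N * ‖U - V‖ * ‖O‖ := by
        have h2 : (2:ℝ) ≤ 2 * Real.sqrt N := by linarith
        have := mul_le_mul_of_nonneg_right
          (mul_le_mul_of_nonneg_right h2 (norm_nonneg (U - V))) (norm_nonneg O)
        linarith [this]
end
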